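/- Suppose M and N are nests on a Hilbert space with Hausdorff distance d(M, N) < 1 (each projection of one nest is within distance < 1 of some projection of the other). Then for each P in M there is a unique Q in N with ‖P − Q‖ < 1, and the resulting map θ : M → N is an order-preserving bijection. -/

import Mathlib

open ContinuousLinearMap

section AuxLemmas

section Gen
variable {A : Type*} [NormedRing A] [CompleteSpace A]

-- corner inverse
lemma corner_inv (E F : A) (hE : E*E = E) (hD : ‖E*(1-F)*E‖ < 1) :
    ∃ e : A, e*(E*F*E) = E ∧ (E*F*E)*e = E ∧ E*e = e ∧ e*E = e := by
  set D := E*(1-F)*E with hDdef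
  have hDE : D*E = D := by rw [hDdef, mul_assoc, hE]
  have hED : E*D = D := by rw [hDdef, ← mul_assoc, ← mul_assoc, hE]
  let u : Aˣ := Units.oneSub D hD
  have hu : (u : A) = 1 - D := rfl
  set r : A := ↑u⁻¹ with hrdef
  have hr1 : r * (1 - D) = 1 := by rw [← hu]; exact u.inv_mul
  have h1r : (1 - D) * r = 1 := by rw [← hu]; exact u.mul_inv
  have hcomm : E * (1-D) = (1-D) * E := by rw [mul_one_sub, one_sub_mul, hED, hDE]
  have hrE : r * E = E * r := by
    calc r*E = r*E*((1-D)*r) := by rw [h1r, mul_one]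
    _ = r*(E*(1-D))*r := by noncomm_ring
    _ = r*((1-D)*E)*r := by rw [hcomm]
    _ = (r*(1-D))*(E*r) := by noncomm_ring
    _ = E*r := by rw [hr1, one_mul]
  have hEFE : E*F*E = E - D := by
    have h1 : E*F = E - E*(1-F) := by rw [mul_one_sub]; abel
    rw [h1, sub_mul, hE, hDdef]
  have hr1E : r*(1-E) = 1-E := by
    have h0 : D*(1-E) = 0 := by rw [mul_one_sub, hDE, sub_self]
    have h2 : (1-D)*(1-E) = 1-E := by rw [sub_mul, one_mul, h0, sub_zero]
    calc r*(1-E) = r*((1-D)*(1-E)) := by rw [h2]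
    _ = (r*(1-D))*(1-E) := by rw [mul_assoc]
    _ = 1-E := by rw [hr1, one_mul]
  have h1Er : (1-E)*r = 1-E := by
    have h0 : (1-E)*D = 0 := by rw [one_sub_mul, hED, sub_self]
    have h2 : (1-E)*(1-D) = 1-E := by rw [mul_sub, mul_one, h0, sub_zero]
    calc (1-E)*r = ((1-E)*(1-D))*r := by rw [h2]
    _ = (1-E)*((1-D)*r) := by rw [mul_assoc]
    _ = 1-E := by rw [h1r, mul_one]
  refine ⟨r*E, ?_, ?_, ?_, ?_⟩
  · have hEEFE : E*(E*F*E) = E*F*E := by rw [← mul_assoc, ← mul_assoc, hE]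
    calc r*E*(E*F*E) = r*(E*(E*F*E)) := by rw [mul_assoc r E (E*F*E)]
    _ = r*(E*F*E) := by rw [hEEFE]
    _ = r*(E-D) := by rw [hEFE]
    _ = r*(1-D) - r*(1-E) := by rw [← mul_sub]; congr 1; abel
    _ = E := by rw [hr1, hr1E]; abel
  · calc (E*F*E)*(r*E) = (E-D)*r*E := by rw [hEFE, mul_assoc]
    _ = ((1-D)*r - (1-E)*r)*E := by congr 1; rw [← sub_mul]; congr 1; abel
    _ = (1 - (1-E))*E := by rw [h1r, h1Er]
    _ = E := by rw [sub_mul, one_mul, one_sub_mul, hE, sub_self, sub_zero]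
  · show E*(r*E) = r*E
    rw [← mul_assoc, ← hrE, mul_assoc, hE]
  · show (r*E)*E = r*E
    rw [mul_assoc, hE]



lemma pairing (E F : A) (hE : E*E = E) (hF : F*F = F)
    (hD1 : ‖E*(1-F)*E‖ < 1) (hD2 : ‖F*(1-E)*F‖ < 1) :
    ∃ v : A, (E*F)*v = E ∧ v*(E*F) = F ∧ F*v = v ∧ v*E = v := by
  obtain ⟨e, he1, he2, he3, he4⟩ := corner_inv E F hE hD1
  obtain ⟨f, hf1, hf2, hf3, hf4⟩ := corner_inv F E hF hD2
  have hE' : ∀ x : A, E*(E*x) = E*x := fun x => by rw [← mul_assoc, hE]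
  have hF' : ∀ x : A, F*(F*x) = F*x := fun x => by rw [← mul_assoc, hF]
  have key2 : (f*(F*E))*(E*F) = F := by
    have h1 : (f*(F*E))*(E*F) = f*(F*E*F) := by
      simp only [mul_assoc, hE', hF']
    rw [h1, hf1]
  refine ⟨f*(F*E), ?_, key2, ?_, ?_⟩
  · set g : A := E - (E*F)*(f*(F*E)) with hg
    have hgE : g*E = g := by
      rw [hg, sub_mul, hE]
      congr 1
      simp only [mul_assoc, hE, hE', hF']
    have hgEF : g*(E*F) = 0 := by
      have h1 : ((E*F)*(f*(F*E)))*(E*F) = (E*F)*(f*(F*E*F)) := by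
        simp only [mul_assoc, hE', hF']
      rw [hg, sub_mul, h1, hf1]
      simp only [mul_assoc, hE', hF', hE, hF, sub_self]
    have hg0 : g = 0 := by
      calc g = g*E := hgE.symm
      _ = g*((E*F*E)*e) := by rw [he2]
      _ = (g*(E*F))*(E*e) := by simp only [mul_assoc]
      _ = 0 := by rw [hgEF, zero_mul]
    rw [hg, sub_eq_zero] at hg0
    exact hg0.symm
  · rw [← mul_assoc, hf3]
  · simp only [mul_assoc, hE]

lemma uniq_gen (E F F' : A) (hE : E*E = E) (hF : F*F = F) (hF' : F'*F' = F')
    (hle : F'*F = F) (hle' : F*F' = F)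
    (hD1 : ‖E*(1-F)*E‖ < 1) (hD2 : ‖F*(1-E)*F‖ < 1)
    (hD3 : ‖E*(1-F')*E‖ < 1) (hD4 : ‖F'*(1-E)*F'‖ < 1) : F = F' := by
  obtain ⟨v₁, hv1a, hv1b, hv1c, hv1d⟩ := pairing E F hE hF hD1 hD2
  obtain ⟨v₂, hv2a, hv2b, hv2c, hv2d⟩ := pairing E F' hE hF' hD3 hD4
  have hE' : ∀ x : A, E*(E*x) = E*x := fun x => by rw [← mul_assoc, hE]
  set m : A := v₁*(E*F') with hm
  set n : A := v₂*(E*F) with hn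
  have hnm : n*m = F' := by
    calc n*m = v₂*(((E*F)*v₁)*(E*F')) := by rw [hn, hm]; simp only [mul_assoc]
    _ = v₂*(E*(E*F')) := by rw [hv1a]
    _ = v₂*(E*F') := by rw [hE']
    _ = F' := hv2b
  have hFm : F*m = m := by rw [hm, ← mul_assoc, hv1c]
  have hmF : m*F = F := by
    calc m*F = v₁*(E*(F'*F)) := by rw [hm]; simp only [mul_assoc]
    _ = v₁*(E*F) := by rw [hle]
    _ = F := hv1b
  have hmF' : m*F' = m := by
    calc m*F' = v₁*(E*(F'*F')) := by rw [hm]; simp only [mul_assoc]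
    _ = m := by rw [hF', hm]
  have hmm : m*m = m := by
    calc m*m = m*(F*m) := by rw [hFm]
    _ = (m*F)*m := (mul_assoc m F m).symm
    _ = F*m := by rw [hmF]
    _ = m := hFm
  have hF'm : F'*m = m := by
    calc F'*m = F'*(F*m) := by rw [hFm]
    _ = (F'*F)*m := by rw [mul_assoc]
    _ = m := by rw [hle, hFm]
  have hstep : m - F = F' - F := by
    have hmz : m*(m-F) = m - F := by rw [mul_sub, hmm, hmF]
    have hmR : m*(F'-F) = m - F := by rw [mul_sub, hmF', hmF]
    have h0 : m*((m - F) - (F' - F)) = 0 := by rw [mul_sub, hmz, hmR, sub_self]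
    have h1 : F'*((m-F) - (F'-F)) = (m-F) - (F'-F) := by
      rw [mul_sub, mul_sub, mul_sub, hF'm, hle, hF']
    have h2 : (m - F - (F'-F)) = 0 := by
      calc m - F - (F'-F) = F' * (m - F - (F'-F)) := h1.symm
      _ = (n*m)*(m-F-(F'-F)) := by rw [hnm]
      _ = n*(m*(m-F-(F'-F))) := mul_assoc _ _ _
      _ = 0 := by rw [h0, mul_zero]
    exact sub_eq_zero.mp h2
  have h2 : m - F = 0 := by
    have h3 : F*(m - F) = m - F := by rw [mul_sub, hFm, hF]
    have h4 : F*(F' - F) = 0 := by rw [mul_sub, hle', hF, sub_self]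
    rw [← h3, hstep, h4]
  have h5 : F' - F = 0 := by rw [← hstep, h2]
  exact (sub_eq_zero.mp h5).symm



end Gen

section Gen
variable {A : Type*} [NormedRing A] [CompleteSpace A]

lemma norm_mul_one_sub_le (E F : A) (hF : F*F = F) (h1F : ‖(1:A)-F‖ ≤ 1) :
    ‖E*(1-F)‖ ≤ ‖E-F‖ := by
  have h0 : F*(1-F) = 0 := by rw [mul_one_sub, hF, sub_self]
  have h1 : E*(1-F) = (E-F)*(1-F) := by rw [sub_mul, h0, sub_zero]
  calc ‖E*(1-F)‖ = ‖(E-F)*(1-F)‖ := by rw [h1]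
  _ ≤ ‖E-F‖*‖(1:A)-F‖ := norm_mul_le _ _
  _ ≤ ‖E-F‖*1 := by gcongr
  _ = ‖E-F‖ := mul_one _

lemma norm_one_sub_mul_le (E F : A) (hF : F*F = F) (h1F : ‖(1:A)-F‖ ≤ 1) :
    ‖(1-F)*E‖ ≤ ‖E-F‖ := by
  have h0 : (1-F)*F = 0 := by rw [one_sub_mul, hF, sub_self]
  have h1 : (1-F)*E = (1-F)*(E-F) := by rw [mul_sub, h0, sub_zero]
  calc ‖(1-F)*E‖ = ‖(1-F)*(E-F)‖ := by rw [h1]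
  _ ≤ ‖(1:A)-F‖*‖E-F‖ := norm_mul_le _ _
  _ ≤ 1*‖E-F‖ := by gcongr
  _ = ‖E-F‖ := one_mul _

lemma norm_D_lt_one (E F : A) (hF : F*F = F) (h1F : ‖(1:A)-F‖ ≤ 1)
    (hEF : ‖E-F‖ < 1) : ‖E*(1-F)*E‖ < 1 := by
  have hsplit : E*(1-F)*E = (E*(1-F))*((1-F)*E) := by
    have h2 : ((1:A)-F)*(1-F) = 1-F := by
      rw [mul_one_sub, one_sub_mul, hF, sub_self, sub_zero]
    calc E*(1-F)*E = E*((1-F)*(1-F))*E := by rw [h2]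
    _ = (E*(1-F))*((1-F)*E) := by simp only [mul_assoc]
  rw [hsplit]
  have b1 := norm_mul_one_sub_le E F hF h1F
  have b2 := norm_one_sub_mul_le E F hF h1F
  calc ‖(E*(1-F))*((1-F)*E)‖ ≤ ‖E*(1-F)‖*‖(1-F)*E‖ := norm_mul_le _ _
  _ < 1 := by nlinarith [norm_nonneg (E*(1-F)), norm_nonneg ((1-F)*E), norm_nonneg (E-F)]

end Gen

section CLM
variable {H : Type*} [NormedAddCommGroup H] [InnerProductSpace ℂ H] [CompleteSpace H]

lemma proj_norm_le_one (P : H →L[ℂ] H) (hsa : IsSelfAdjoint P) (hidem : P*P = P) :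
    ‖P‖ ≤ 1 := by
  have h := CStarRing.norm_star_mul_self (x := P)
  rw [hsa.star_eq, hidem] at h
  nlinarith [norm_nonneg P]

lemma one_sub_proj (P : H →L[ℂ] H) (hsa : IsSelfAdjoint P) (hidem : P*P = P) :
    IsSelfAdjoint ((1:H →L[ℂ] H)-P) ∧ ((1:H →L[ℂ] H)-P)*(1-P) = 1-P := by
  constructor
  · exact (IsSelfAdjoint.one (H →L[ℂ] H)).sub hsa
  · rw [mul_one_sub, one_sub_mul, hidem, sub_self, sub_zero]

lemma uniq_clm (E F F' : H →L[ℂ] H)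
    (hEsa : IsSelfAdjoint E) (hE : E*E = E)
    (hFsa : IsSelfAdjoint F) (hF : F*F = F)
    (hF'sa : IsSelfAdjoint F') (hF' : F'*F' = F')
    (hle : F'*F = F) (d1 : ‖E-F‖ < 1) (d2 : ‖E-F'‖ < 1) : F = F' := by
  have hle' : F*F' = F := by
    have := congrArg star hle
    rwa [star_mul, hFsa.star_eq, hF'sa.star_eq] at this
  have h1E : ‖(1:H →L[ℂ] H)-E‖ ≤ 1 :=
    proj_norm_le_one _ (one_sub_proj E hEsa hE).1 (one_sub_proj E hEsa hE).2
  have h1F : ‖(1:H →L[ℂ] H)-F‖ ≤ 1 :=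
    proj_norm_le_one _ (one_sub_proj F hFsa hF).1 (one_sub_proj F hFsa hF).2
  have h1F' : ‖(1:H →L[ℂ] H)-F'‖ ≤ 1 :=
    proj_norm_le_one _ (one_sub_proj F' hF'sa hF').1 (one_sub_proj F' hF'sa hF').2
  have dr1 : ‖F-E‖ < 1 := by rwa [norm_sub_rev]
  have dr2 : ‖F'-E‖ < 1 := by rwa [norm_sub_rev]
  exact uniq_gen E F F' hE hF hF' hle hle'
    (norm_D_lt_one E F hF h1F d1) (norm_D_lt_one F E hE h1E dr1)
    (norm_D_lt_one E F' hF' h1F' d2) (norm_D_lt_one F' E hE h1E dr2)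

end CLM


section CLM
variable {H : Type*} [NormedAddCommGroup H] [InnerProductSpace ℂ H] [CompleteSpace H]

local notation "⟪" x ", " y "⟫" => @inner ℂ _ _ x y

lemma norm_sub_le_max (E F : H →L[ℂ] H) (hEsa : IsSelfAdjoint E) (hFsa : IsSelfAdjoint F)
    (hE : E*E = E) (hF : F*F = F) :
    ‖E - F‖ ≤ max ‖E*(1-F)‖ ‖(1-E)*F‖ := by
  set a := ‖E*(1-F)‖ with ha
  set b := ‖(1-E)*F‖ with hb
  set M := max a b with hM
  have ha0 : 0 ≤ a := norm_nonneg _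
  have hb0 : 0 ≤ b := norm_nonneg _
  have hM0 : 0 ≤ M := le_trans ha0 (le_max_left _ _)
  refine opNorm_le_bound _ hM0 (fun x => ?_)
  set u : H := (E*(1-F)) ((1-F) x) with hu
  set v : H := ((1-E)*F) (F x) with hv
  -- decomposition
  have hop1 : (E*(1-F))*(1-F) = E*(1-F) := by
    have h2 : ((1:H →L[ℂ] H)-F)*(1-F) = 1-F := by
      rw [mul_one_sub, one_sub_mul, hF, sub_self, sub_zero]
    rw [mul_assoc, h2]
  have hop2 : ((1-E)*F)*F = (1-E)*F := by rw [mul_assoc, hF]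
  have hdecop : (E*(1-F)) - ((1-E)*F) = E - F := by
    rw [mul_one_sub, one_sub_mul]; abel
  have hdec : (E-F) x = u - v := by
    rw [hu, hv, ← ContinuousLinearMap.mul_apply, ← ContinuousLinearMap.mul_apply,
      hop1, hop2, ← ContinuousLinearMap.sub_apply, hdecop]
  have hsymE : ∀ z w : H, ⟪E z, w⟫ = ⟪z, E w⟫ := fun z w => by
    nth_rewrite 1 [← ContinuousLinearMap.isSelfAdjoint_iff'.mp hEsa]
    exact ContinuousLinearMap.adjoint_inner_left E w z
  have hsymF : ∀ z w : H, ⟪F z, w⟫ = ⟪z, F w⟫ := fun z w => by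
    nth_rewrite 1 [← ContinuousLinearMap.isSelfAdjoint_iff'.mp hFsa]
    exact ContinuousLinearMap.adjoint_inner_left F w z
  -- orthogonality of u and v
  have horth : ⟪u, v⟫ = 0 := by
    have h3 : u = E ((1-F) ((1-F) x)) := by
      rw [hu, ContinuousLinearMap.mul_apply]
    have h4 : v = (1-E) (F (F x)) := by
      rw [hv, ContinuousLinearMap.mul_apply]
    rw [h3, h4, hsymE _ _]
    have h5 : E ((1-E) (F (F x))) = 0 := by
      rw [← ContinuousLinearMap.mul_apply, mul_one_sub, hE, sub_self,
        ContinuousLinearMap.zero_apply]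
    rw [h5, inner_zero_right]
  -- orthogonality of Fx and (1-F)x
  have horth2 : ⟪F x, (1-F) x⟫ = 0 := by
    rw [hsymF _ _]
    have h5 : F ((1-F) x) = 0 := by
      rw [← ContinuousLinearMap.mul_apply, mul_one_sub, hF, sub_self,
        ContinuousLinearMap.zero_apply]
    rw [h5, inner_zero_right]
  have hxsum : F x + (1-F) x = x := by
    simp [ContinuousLinearMap.sub_apply]
  have hpyth : ‖x‖^2 = ‖F x‖^2 + ‖(1-F) x‖^2 := by
    have := @norm_add_sq ℂ _ _ _ _ (F x) ((1-F) x)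
    rw [hxsum, horth2] at this
    simpa using this
  have hlhs : ‖(E-F) x‖^2 = ‖u‖^2 + ‖v‖^2 := by
    rw [hdec]
    have := @norm_sub_sq ℂ _ _ _ _ u v
    rw [horth] at this
    simpa using this
  have hub : ‖u‖ ≤ a * ‖(1-F) x‖ := le_opNorm _ _
  have hvb : ‖v‖ ≤ b * ‖F x‖ := le_opNorm _ _
  have haM : a ≤ M := le_max_left _ _
  have hbM : b ≤ M := le_max_right _ _
  have hsq : ‖(E-F) x‖^2 ≤ M^2 * ‖x‖^2 := by
    rw [hlhs, hpyth]
    have h1' : ‖u‖ ≤ M * ‖(1-F) x‖ :=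
      le_trans hub (mul_le_mul_of_nonneg_right haM (norm_nonneg _))
    have h2' : ‖v‖ ≤ M * ‖F x‖ :=
      le_trans hvb (mul_le_mul_of_nonneg_right hbM (norm_nonneg _))
    have h1 : ‖u‖^2 ≤ M^2 * ‖(1-F) x‖^2 := by
      rw [← mul_pow]; exact pow_le_pow_left₀ (norm_nonneg _) h1' 2
    have h2 : ‖v‖^2 ≤ M^2 * ‖F x‖^2 := by
      rw [← mul_pow]; exact pow_le_pow_left₀ (norm_nonneg _) h2' 2
    nlinarith
  have h6 : ‖(E-F) x‖^2 ≤ (M*‖x‖)^2 := by rw [mul_pow]; exact hsq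
  have h7 := Real.sqrt_le_sqrt h6
  rwa [Real.sqrt_sq (norm_nonneg _), Real.sqrt_sq (mul_nonneg hM0 (norm_nonneg x))] at h7

end CLM

end AuxLemmas

/-- A nest on a Hilbert space: a chain of orthogonal projections containing `0` and `1`,
closed under arbitrary intersections (infima of ranges) and closed spans (closures of
suprema of ranges). -/
structure IsNest {H : Type*} [NormedAddCommGroup H] [InnerProductSpace ℂ H]
    [CompleteSpace H] (𝒩 : Set (H →L[ℂ] H)) : Prop where
  selfAdjoint : ∀ P ∈ 𝒩, IsSelfAdjoint P
  idem : ∀ P ∈ 𝒩, P ∘L P = P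
  chain : ∀ P ∈ 𝒩, ∀ Q ∈ 𝒩, Q ∘L P = P ∨ P ∘L Q = Q
  zero_mem : 0 ∈ 𝒩
  one_mem : 1 ∈ 𝒩
  inf_mem : ∀ S ⊆ 𝒩, ∃ P ∈ 𝒩, LinearMap.range (P : H →ₗ[ℂ] H) = ⨅ Q ∈ S, LinearMap.range (Q : H →ₗ[ℂ] H)
  sup_mem : ∀ S ⊆ 𝒩, ∃ P ∈ 𝒩,
    LinearMap.range (P : H →ₗ[ℂ] H) = (⨆ Q ∈ S, LinearMap.range (Q : H →ₗ[ℂ] H)).topologicalClosure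

/-- If nests `𝒨`, `𝒩` are at Hausdorff distance `< 1`, then each `P ∈ 𝒨` is at distance
`< 1` from a unique `Q ∈ 𝒩`, and any map `θ` realizing this correspondence is an
order-preserving bijection of `𝒨` onto `𝒩`. -/
theorem stmt11 {H : Type*} [NormedAddCommGroup H] [InnerProductSpace ℂ H]
    [CompleteSpace H]
    (𝒨 𝒩 : Set (H →L[ℂ] H)) (hM : IsNest 𝒨) (hN : IsNest 𝒩)
    (hdist : Metric.hausdorffDist 𝒨 𝒩 < 1) :
    (∀ P ∈ 𝒨, ∃! Q, Q ∈ 𝒩 ∧ ‖P - Q‖ < 1) ∧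
      ∀ θ : (H →L[ℂ] H) → (H →L[ℂ] H),
        (∀ P ∈ 𝒨, θ P ∈ 𝒩 ∧ ‖P - θ P‖ < 1) →
        Set.BijOn θ 𝒨 𝒩 ∧
          ∀ P ∈ 𝒨, ∀ P' ∈ 𝒨, P' ∘L P = P → θ P' ∘L θ P = θ P := by
  have idemM : ∀ P ∈ 𝒨, P*P = P := fun P hP => by
    rw [ContinuousLinearMap.mul_def]; exact hM.idem P hP
  have idemN : ∀ Q ∈ 𝒩, Q*Q = Q := fun Q hQ => by
    rw [ContinuousLinearMap.mul_def]; exact hN.idem Q hQ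
  have hMb : Bornology.IsBounded 𝒨 := by
    refine (Metric.isBounded_closedBall (x := (0 : H →L[ℂ] H)) (r := 1)).subset ?_
    intro P hP
    rw [Metric.mem_closedBall, dist_zero_right]
    exact proj_norm_le_one P (hM.selfAdjoint P hP) (idemM P hP)
  have hNb : Bornology.IsBounded 𝒩 := by
    refine (Metric.isBounded_closedBall (x := (0 : H →L[ℂ] H)) (r := 1)).subset ?_
    intro Q hQ
    rw [Metric.mem_closedBall, dist_zero_right]
    exact proj_norm_le_one Q (hN.selfAdjoint Q hQ) (idemN Q hQ)
  have hfin : EMetric.hausdorffEdist 𝒨 𝒩 ≠ ⊤ :=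
    Metric.hausdorffEdist_ne_top_of_nonempty_of_bounded ⟨0, hM.zero_mem⟩
      ⟨0, hN.zero_mem⟩ hMb hNb
  have hex : ∀ P ∈ 𝒨, ∃ Q ∈ 𝒩, ‖P - Q‖ < 1 := fun P hP => by
    obtain ⟨Q, hQ, hd⟩ := Metric.exists_dist_lt_of_hausdorffDist_lt hP hdist hfin
    exact ⟨Q, hQ, by rwa [dist_eq_norm] at hd⟩
  have hex' : ∀ Q ∈ 𝒩, ∃ P ∈ 𝒨, ‖P - Q‖ < 1 := fun Q hQ => by
    obtain ⟨P, hP, hd⟩ := Metric.exists_dist_lt_of_hausdorffDist_lt' hQ hdist hfin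
    exact ⟨P, hP, by rwa [dist_eq_norm] at hd⟩
  -- uniqueness of nearby nest elements
  have huniqN : ∀ C : H →L[ℂ] H, IsSelfAdjoint C → C*C = C →
      ∀ Q₁ ∈ 𝒩, ∀ Q₂ ∈ 𝒩, ‖C - Q₁‖ < 1 → ‖C - Q₂‖ < 1 → Q₁ = Q₂ := by
    intro C hCsa hC Q₁ hQ₁ Q₂ hQ₂ hd₁ hd₂
    rcases hN.chain Q₁ hQ₁ Q₂ hQ₂ with h | h
    · exact uniq_clm C Q₁ Q₂ hCsa hC (hN.selfAdjoint Q₁ hQ₁) (idemN Q₁ hQ₁)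
        (hN.selfAdjoint Q₂ hQ₂) (idemN Q₂ hQ₂)
        (by rw [ContinuousLinearMap.mul_def]; exact h) hd₁ hd₂
    · exact (uniq_clm C Q₂ Q₁ hCsa hC (hN.selfAdjoint Q₂ hQ₂) (idemN Q₂ hQ₂)
        (hN.selfAdjoint Q₁ hQ₁) (idemN Q₁ hQ₁)
        (by rw [ContinuousLinearMap.mul_def]; exact h) hd₂ hd₁).symm
  have huniqM : ∀ C : H →L[ℂ] H, IsSelfAdjoint C → C*C = C →
      ∀ P₁ ∈ 𝒨, ∀ P₂ ∈ 𝒨, ‖C - P₁‖ < 1 → ‖C - P₂‖ < 1 → P₁ = P₂ := by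
    intro C hCsa hC P₁ hP₁ P₂ hP₂ hd₁ hd₂
    rcases hM.chain P₁ hP₁ P₂ hP₂ with h | h
    · exact uniq_clm C P₁ P₂ hCsa hC (hM.selfAdjoint P₁ hP₁) (idemM P₁ hP₁)
        (hM.selfAdjoint P₂ hP₂) (idemM P₂ hP₂)
        (by rw [ContinuousLinearMap.mul_def]; exact h) hd₁ hd₂
    · exact (uniq_clm C P₂ P₁ hCsa hC (hM.selfAdjoint P₂ hP₂) (idemM P₂ hP₂)
        (hM.selfAdjoint P₁ hP₁) (idemM P₁ hP₁)
        (by rw [ContinuousLinearMap.mul_def]; exact h) hd₂ hd₁).symm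
  constructor
  · intro P hP
    obtain ⟨Q, hQ, hd⟩ := hex P hP
    exact ⟨Q, ⟨hQ, hd⟩, fun Q' hQ' =>
      huniqN P (hM.selfAdjoint P hP) (idemM P hP) Q' hQ'.1 Q hQ hQ'.2 hd⟩
  · intro θ hθ
    constructor
    · refine ⟨fun P hP => (hθ P hP).1, ?_, ?_⟩
      · intro P hP P' hP' heq
        have h1 : ‖θ P - P‖ < 1 := by rw [norm_sub_rev]; exact (hθ P hP).2
        have h2 : ‖θ P - P'‖ < 1 := by
          rw [heq, norm_sub_rev]; exact (hθ P' hP').2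
        exact huniqM (θ P) (hN.selfAdjoint _ (hθ P hP).1) (idemN _ (hθ P hP).1)
          P hP P' hP' h1 h2
      · intro Q hQ
        obtain ⟨P, hP, hd⟩ := hex' Q hQ
        exact ⟨P, hP, huniqN P (hM.selfAdjoint P hP) (idemM P hP)
          (θ P) (hθ P hP).1 Q hQ (hθ P hP).2 hd⟩
    · intro P hP P' hP' hord
      have hPsa := hM.selfAdjoint P hP
      have hP'sa := hM.selfAdjoint P' hP'
      have hQ := hθ P hP
      have hQ' := hθ P' hP'
      have hQsa := hN.selfAdjoint _ hQ.1
      have hQ'sa := hN.selfAdjoint _ hQ'.1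
      have hQidem := idemN _ hQ.1
      have hQ'idem := idemN _ hQ'.1
      have hPP' : P' * P = P := by rw [ContinuousLinearMap.mul_def]; exact hord
      rcases hN.chain (θ P) hQ.1 (θ P') hQ'.1 with h | h
      · exact h
      · -- h : θ P ∘L θ P' = θ P', i.e. θ P' ≤ θ P; show θ P' = θ P
        have hmul : (θ P) * (θ P') = θ P' := by
          rw [ContinuousLinearMap.mul_def]; exact h
        have hP'P : P * P' = P := by
          have := congrArg star hPP'
          rwa [star_mul, hPsa.star_eq, hP'sa.star_eq] at this
        have h1P : ‖(1:H →L[ℂ] H) - P‖ ≤ 1 :=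
          proj_norm_le_one _ (one_sub_proj P hPsa (idemM P hP)).1
            (one_sub_proj P hPsa (idemM P hP)).2
        have h1Q' : ‖(1:H →L[ℂ] H) - θ P'‖ ≤ 1 :=
          proj_norm_le_one _ (one_sub_proj _ hQ'sa hQ'idem).1
            (one_sub_proj _ hQ'sa hQ'idem).2
        have key : ‖P - θ P'‖ < 1 := by
          refine lt_of_le_of_lt
            (norm_sub_le_max P (θ P') hPsa hQ'sa (idemM P hP) hQ'idem) ?_
          refine max_lt ?_ ?_
          · -- ‖P*(1-θP')‖ < 1
            have e1 : P*(1 - θ P') = P*(P'*(1 - θ P')) := by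
              rw [← mul_assoc, hP'P]
            calc ‖P*(1 - θ P')‖ = ‖P*(P'*(1 - θ P'))‖ := by rw [e1]
            _ ≤ ‖P‖ * ‖P'*(1 - θ P')‖ := norm_mul_le _ _
            _ ≤ 1 * ‖P'*(1 - θ P')‖ := by
                gcongr
                exact proj_norm_le_one P hPsa (idemM P hP)
            _ = ‖P'*(1 - θ P')‖ := one_mul _
            _ ≤ ‖P' - θ P'‖ := norm_mul_one_sub_le P' (θ P') hQ'idem h1Q'
            _ < 1 := hQ'.2
          · -- ‖(1-P)*θP'‖ < 1
            have e2 : (1 - P)*(θ P') = ((1-P)*(θ P))*(θ P') := by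
              rw [mul_assoc, hmul]
            calc ‖(1 - P)*(θ P')‖ = ‖((1-P)*(θ P))*(θ P')‖ := by rw [e2]
            _ ≤ ‖(1-P)*(θ P)‖ * ‖θ P'‖ := norm_mul_le _ _
            _ ≤ ‖(1-P)*(θ P)‖ * 1 := by
                gcongr
                exact proj_norm_le_one _ hQ'sa hQ'idem
            _ = ‖(1-P)*(θ P)‖ := mul_one _
            _ ≤ ‖θ P - P‖ := norm_one_sub_mul_le (θ P) P (idemM P hP) h1P
            _ < 1 := by rw [norm_sub_rev]; exact hQ.2
        have heq : θ P' = θ P :=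
          huniqN P hPsa (idemM P hP) (θ P') hQ'.1 (θ P) hQ.1 key hQ.2
        rw [heq]
        exact hN.idem (θ P) hQ.1
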